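/- Lipschitz continuity of the solution mapping under truncation. Let P and Y be normed vector spaces, X a Banach space, P×X with the max-norm, C ⊆ Y a closed convex cone with nonempty interior, F: P×X ⇉ Y with nonempty values, and (p̄,x̄) ∈ graph Solv. Suppose hypotheses (i)–(vi) hold: (i) x̄ ∈ Solv(p̄); (ii) p ↦ ν_{F,C}(p,x̄) is u.s.c. at p̄; (iii) for some δ₁ > 0, x ↦ F(p,x) is l.s.c. on X for every p ∈ B(p̄,δ₁); (iv) for some δ₂ > 0, for every p ∈ B(p̄,δ₂) the mapping x ↦ F(p,x) admits an outer prederivative H_{F(p,·)}(x;·) at each x ∈ B(x̄,δ₂); (v) σ_H(p̄,x̄) = inf{ sup_{‖u‖=1} core(C, H_{F(p,·)}(x;u)) : (p,x) ∈ B(p̄,δ₂)×B(x̄,δ₂), F(p,x) ⊄ C } > 0; (vi) for some τ, s, ℓ > 0, for every x ∈ B(x̄,s) the mapping p ↦ F(p,x) is Lipschitz with rate ℓ on B(p̄,τ) with respect to the Pompeiu–Hausdorff distance. If, moreover, F is C-concave on P×X, then Solv has a Lipschitz continuous graphical localization around (p̄,x̄): there exist neighbourhoods V of p̄ and U of x̄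 such that the truncated mapping p ↦ Solv(p) ∩ U is Lipschitz continuous on V with respect to the Pompeiu–Hausdorff distance. -/

import Mathlib

open Classical Metric Filter Set
open scoped ENNReal Topology Pointwise

/-- Excess of `A` over `C`: `e(A,C) = sup_{a ∈ A} dist(a,C)`. -/
noncomputable def exc {Y : Type*} [PseudoEMetricSpace Y] (A C : Set Y) : ℝ≥0∞ :=
  ⨆ y ∈ A, EMetric.infEdist y C

/-- A set-valued mapping `Φ` is l.s.c. at `x0`. -/
def SVLscAt {X Y : Type*} [PseudoMetricSpace X] [TopologicalSpace Y]
    (Φ : X → Set Y) (x0 : X) : Prop :=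
  ∀ V : Set Y, IsOpen V → (Φ x0 ∩ V).Nonempty →
    ∃ δ > (0:ℝ), ∀ x ∈ closedBall x0 δ, (Φ x ∩ V).Nonempty

/-- `H` is a (positively homogeneous) outer prederivative of `Φ` at `x0`. -/
def IsOuterPrederivAt {X Y : Type*} [NormedAddCommGroup X] [NormedSpace ℝ X]
    [NormedAddCommGroup Y] [NormedSpace ℝ Y]
    (Φ : X → Set Y) (H : X → Set Y) (x0 : X) : Prop :=
  (∀ t : ℝ, 0 < t → ∀ u : X, H (t • u) = t • H u) ∧
  ∀ ε > (0:ℝ), ∃ δ > (0:ℝ), ∀ x ∈ closedBall x0 δ,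
    Φ x ⊆ Φ x0 + H (x - x0) + (ε * ‖x - x0‖) • closedBall (0:Y) 1

/-- `core(K,S) = sup{r > 0 : S + r𝔹 ⊆ K}`. -/
noncomputable def coreSet {Y : Type*} [NormedAddCommGroup Y] [NormedSpace ℝ Y]
    (K S : Set Y) : ℝ≥0∞ :=
  ⨆ r ∈ {r : ℝ | 0 < r ∧ S + r • closedBall (0:Y) 1 ⊆ K}, ENNReal.ofReal r

/-- `Φ : P ⇉ X` is Aubin continuous at `(pbar,xbar)` with rate `κ > 0`. -/
def AubinWith {P X : Type*} [PseudoMetricSpace P] [PseudoMetricSpace X]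
    (Φ : P → Set X) (pbar : P) (xbar : X) (κ : ℝ) : Prop :=
  0 < κ ∧ ∃ δ > (0:ℝ), ∃ r > (0:ℝ), ∀ p₁ ∈ closedBall pbar δ, ∀ p₂ ∈ closedBall pbar δ,
    ∀ x ∈ Φ p₂ ∩ closedBall xbar r,
      EMetric.infEdist x (Φ p₁) ≤ ENNReal.ofReal (κ * dist p₁ p₂)

/-- Modulus of Aubin continuity: the infimum of the admissible rates. -/
noncomputable def aubinMod {P X : Type*} [PseudoMetricSpace P] [PseudoMetricSpace X]
    (Φ : P → Set X) (pbar : P) (xbar : X) : ℝ≥0∞ :=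
  ⨅ κ ∈ {κ : ℝ | AubinWith Φ pbar xbar κ}, ENNReal.ofReal κ

section AuxLemmas

lemma ennreal_ekeland {X : Type*} [MetricSpace X] [CompleteSpace X]
    (f : X → ℝ≥0∞) (hf : LowerSemicontinuous f) (γ : ℝ≥0∞) (hγ0 : γ ≠ 0) (hγt : γ ≠ ⊤)
    (x₀ : X) (hx₀ : f x₀ ≠ ⊤) :
    ∃ z : X, f z + γ * edist z x₀ ≤ f x₀ ∧ ∀ x : X, f z ≤ f x + γ * edist x z := by
  set S : X → Set X := fun y => {x | f x + γ * edist x y ≤ f y} with hS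
  have hmem : ∀ y, y ∈ S y := by intro y; simp [hS]
  have htrans : ∀ {y x z}, x ∈ S y → z ∈ S x → z ∈ S y := by
    intro y x z hx hz
    have h1 : f z + γ * edist z y ≤ f z + γ * edist z x + γ * edist x y := by
      rw [add_assoc, ← mul_add]
      exact add_le_add_right (mul_le_mul_right (edist_triangle _ _ _) _) _
    calc f z + γ * edist z y ≤ (f z + γ * edist z x) + γ * edist x y := h1
      _ ≤ f x + γ * edist x y := add_le_add_left hz _
      _ ≤ f y := hx
  have hgcont : ∀ y, LowerSemicontinuous (fun x => f x + γ * edist x y) := by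
    intro y
    exact hf.add ((ENNReal.continuous_const_mul hγt).comp
      (continuous_edist.comp (continuous_id.prodMk continuous_const))).lowerSemicontinuous
  have hSclosed : ∀ y, IsClosed (S y) := by
    intro y
    have := (lowerSemicontinuous_iff_isOpen_preimage.1 (hgcont y)) (f y)
    have : IsOpen {x | f y < f x + γ * edist x y} := this
    have heq : S y = {x | f y < f x + γ * edist x y}ᶜ := by
      ext x; simp [hS, not_lt]
    rw [heq]; exact this.isClosed_compl
  have hstep : ∀ (n : ℕ) (y : X), ∃ x, x ∈ S y ∧ f x ≤ (⨅ w ∈ S y, f w) + 2⁻¹ ^ n := by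
    intro n y
    rcases eq_or_ne (⨅ w ∈ S y, f w) ⊤ with h | h
    · exact ⟨y, hmem y, by rw [h]; simp⟩
    · have hlt : (⨅ w ∈ S y, f w) < (⨅ w ∈ S y, f w) + 2⁻¹ ^ n :=
        ENNReal.lt_add_right h (pow_ne_zero n (ENNReal.inv_ne_zero.2 (by norm_num)))
      simp only [iInf_lt_iff] at hlt
      obtain ⟨x, hxS, hx⟩ := hlt
      exact ⟨x, hxS, hx.le⟩
  choose! g hg1 hg2 using hstep
  set u : ℕ → X := fun n => Nat.rec x₀ (fun n xn => g n xn) n with hu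
  have hus : ∀ n, u (n + 1) = g n (u n) := fun n => rfl
  have huS : ∀ n, u (n + 1) ∈ S (u n) := fun n => hg1 n (u n)
  have hchain : ∀ n m, n ≤ m → u m ∈ S (u n) := by
    intro n m hnm
    induction m with
    | zero => rw [Nat.le_zero.1 hnm]; exact hmem _
    | succ k ih =>
      rcases Nat.lt_or_ge n (k + 1) with h | h
      · exact htrans (ih (Nat.lt_succ_iff.1 h)) (huS k)
      · rw [Nat.le_antisymm hnm h]; exact hmem _
  have hfmono : ∀ n m, n ≤ m → f (u m) ≤ f (u n) := by
    intro n m hnm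
    exact le_trans (le_add_right le_rfl) (hchain n m hnm)
  have hfin : ∀ n, f (u n) ≠ ⊤ := fun n => fun h =>
    hx₀ (top_le_iff.1 (h ▸ hfmono 0 n (Nat.zero_le n)))
  have hball : ∀ n, ∀ x ∈ S (u (n + 1)), γ * edist x (u (n + 1)) ≤ 2⁻¹ ^ n := by
    intro n x hx
    have hxSn : x ∈ S (u n) := htrans (huS n) hx
    have h1 : f x + γ * edist x (u (n + 1)) ≤ f (u (n + 1)) := hx
    have h2 : f (u (n + 1)) ≤ f x + 2⁻¹ ^ n := by
      refine le_trans (hg2 n (u n)) (add_le_add_left ?_ _)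
      exact iInf₂_le x hxSn
    have hxt : f x ≠ ⊤ := fun h =>
      hfin (n+1) (top_le_iff.1 (h ▸ le_trans (le_add_right le_rfl) h1))
    exact (ENNReal.add_le_add_iff_left hxt).1 (h1.trans h2)
  have hedist : ∀ n, ∀ x ∈ S (u (n + 1)), edist x (u (n + 1)) ≤ 2⁻¹ ^ n / γ := by
    intro n x hx
    rw [ENNReal.le_div_iff_mul_le (Or.inl hγ0) (Or.inl hγt), mul_comm]
    exact hball n x hx
  have hto : Tendsto (fun n : ℕ => (2⁻¹ : ℝ≥0∞) ^ n / γ) atTop (𝓝 0) := by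
    have h1 : Tendsto (fun n : ℕ => (2⁻¹ : ℝ≥0∞) ^ n) atTop (𝓝 0) :=
      ENNReal.tendsto_pow_atTop_nhds_zero_of_lt_one (by norm_num)
    have := ENNReal.Tendsto.mul_const (b := γ⁻¹) h1 (Or.inr (ENNReal.inv_ne_top.2 hγ0))
    simpa [div_eq_mul_inv] using this
  have hcauchy : CauchySeq u := by
    rw [EMetric.cauchySeq_iff]
    intro ε hε
    obtain ⟨N, hN⟩ := (ENNReal.nhds_zero_basis.tendsto_right_iff.1 hto (ε / 2)
      (ENNReal.half_pos hε.ne')).exists_forall_of_atTop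
    refine ⟨N + 1, fun m hm k hk => ?_⟩
    have h1 : edist (u m) (u (N + 1)) ≤ 2⁻¹ ^ N / γ :=
      hedist N _ (hchain (N + 1) m hm)
    have h2 : edist (u k) (u (N + 1)) ≤ 2⁻¹ ^ N / γ :=
      hedist N _ (hchain (N + 1) k hk)
    calc edist (u m) (u k) ≤ edist (u m) (u (N + 1)) + edist (u (N + 1)) (u k) :=
          edist_triangle _ _ _
      _ ≤ 2⁻¹ ^ N / γ + 2⁻¹ ^ N / γ := add_le_add h1 (by rwa [edist_comm])
      _ < ε / 2 + ε / 2 := ENNReal.add_lt_add (hN N le_rfl) (hN N le_rfl)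
      _ = ε := ENNReal.add_halves ε
  obtain ⟨z, hz⟩ := cauchySeq_tendsto_of_complete hcauchy
  have hzS : ∀ n, z ∈ S (u n) := by
    intro n
    refine (hSclosed (u n)).mem_of_tendsto hz ?_
    filter_upwards [eventually_ge_atTop n] with m hm
    exact hchain n m hm
  refine ⟨z, by exact hzS 0, ?_⟩
  intro x
  by_contra h
  push_neg at h
  have hxSz : x ∈ S z := h.le
  have hxz : x = z := by
    have hkey : ∀ n, γ * edist x z ≤ 2 * 2⁻¹ ^ n := by
      intro n
      have hx1 : x ∈ S (u (n + 1)) := htrans (hzS (n + 1)) hxSz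
      have h1 := hball n x hx1
      have h2 := hball n z (hzS (n + 1))
      calc γ * edist x z ≤ γ * (edist x (u (n + 1)) + edist z (u (n + 1))) := by
            refine mul_le_mul_right ?_ _
            rw [edist_comm z]
            exact edist_triangle _ _ _
        _ = γ * edist x (u (n + 1)) + γ * edist z (u (n + 1)) := mul_add _ _ _
        _ ≤ 2⁻¹ ^ n + 2⁻¹ ^ n := add_le_add h1 h2
        _ = 2 * 2⁻¹ ^ n := (two_mul _).symm
    have hto2 : Tendsto (fun n : ℕ => (2:ℝ≥0∞) * 2⁻¹ ^ n) atTop (𝓝 0) := by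
      have h1 : Tendsto (fun n : ℕ => (2⁻¹ : ℝ≥0∞) ^ n) atTop (𝓝 0) :=
        ENNReal.tendsto_pow_atTop_nhds_zero_of_lt_one (by norm_num)
      have := ENNReal.Tendsto.const_mul (a := 2) h1 (Or.inr (by norm_num))
      simpa using this
    have : γ * edist x z ≤ 0 := ge_of_tendsto hto2 (Eventually.of_forall hkey)
    have : edist x z = 0 := by
      rcases mul_eq_zero.1 (le_antisymm this (zero_le)) with h | h
      · exact absurd h hγ0
      · exact h
    exact edist_eq_zero.1 this
  rw [hxz] at h
  simp at h

lemma exc_le_iff {Y : Type*} [PseudoEMetricSpace Y] {A C : Set Y} {r : ℝ≥0∞} :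
    exc A C ≤ r ↔ ∀ y ∈ A, EMetric.infEdist y C ≤ r := iSup₂_le_iff

lemma le_exc {Y : Type*} [PseudoEMetricSpace Y] {A C : Set Y} {y : Y} (hy : y ∈ A) :
    EMetric.infEdist y C ≤ exc A C :=
  le_iSup₂ (f := fun y (_ : y ∈ A) => EMetric.infEdist y C) y hy

lemma exc_eq_zero {Y : Type*} [EMetricSpace Y] {A C : Set Y} (hC : IsClosed C) :
    exc A C = 0 ↔ A ⊆ C := by
  constructor
  · intro h y hy
    have h1 : EMetric.infEdist y C ≤ 0 := h ▸ le_exc hy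
    have h2 : y ∈ closure C := EMetric.mem_closure_iff_infEdist_zero.2 (le_antisymm h1 (zero_le))
    rwa [hC.closure_eq] at h2
  · intro h
    refine le_antisymm (exc_le_iff.2 fun y hy => ?_) (zero_le)
    rw [show EMetric.infEdist y C = 0 from EMetric.infEdist_zero_of_mem (h hy)]

lemma lsc_of_svlsc {X Y : Type*} [PseudoMetricSpace X] [PseudoEMetricSpace Y]
    (Φ : X → Set Y) (C : Set Y) (h : ∀ x, SVLscAt Φ x) :
    LowerSemicontinuous fun x => exc (Φ x) C := by
  intro x0 c hc
  simp only [exc, lt_iSup_iff] at hc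
  obtain ⟨y₀, hy₀, hy₀c⟩ := hc
  have hVopen : IsOpen {y : Y | c < EMetric.infEdist y C} :=
    isOpen_lt continuous_const EMetric.continuous_infEdist
  obtain ⟨δ, hδ, hδ'⟩ := h x0 _ hVopen ⟨y₀, hy₀, hy₀c⟩
  filter_upwards [Metric.closedBall_mem_nhds x0 hδ] with x hx
  obtain ⟨y, hyΦ, hyV⟩ := hδ' x hx
  exact lt_of_lt_of_le hyV (le_exc hyΦ)

lemma cone_add {Y : Type*} [NormedAddCommGroup Y] [NormedSpace ℝ Y] {C : Set Y}
    (hCconv : Convex ℝ C) (hCcone : ∀ t : ℝ, 0 < t → ∀ y ∈ C, t • y ∈ C)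
    {a b : Y} (ha : a ∈ C) (hb : b ∈ C) : a + b ∈ C := by
  have h := hCconv ha hb (by norm_num : (0:ℝ) ≤ 1/2) (by norm_num : (0:ℝ) ≤ 1/2) (by norm_num)
  have h2 := hCcone 2 (by norm_num) _ h
  have : (2:ℝ) • ((1/2 : ℝ) • a + (1/2 : ℝ) • b) = a + b := by
    rw [smul_add, smul_smul, smul_smul]; norm_num
  rwa [this] at h2

set_option maxHeartbeats 1000000 in
lemma error_bound {P X Y : Type*} [NormedAddCommGroup P] [NormedSpace ℝ P]
    [NormedAddCommGroup X] [NormedSpace ℝ X] [CompleteSpace X]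
    [NormedAddCommGroup Y] [NormedSpace ℝ Y]
    (C : Set Y) (hCclosed : IsClosed C) (hCconv : Convex ℝ C)
    (hCcone : ∀ t : ℝ, 0 < t → ∀ y ∈ C, t • y ∈ C)
    (F : P → X → Set Y)
    (pbar : P) (xbar : X) (δ₂ : ℝ) (H : P → X → X → Set Y)
    (hH : ∀ p ∈ closedBall pbar δ₂, ∀ x ∈ closedBall xbar δ₂,
      IsOuterPrederivAt (F p) (H p x) x)
    (σH : ℝ≥0∞)
    (hσHdef : σH = ⨅ q : {q : P × X // q.1 ∈ closedBall pbar δ₂ ∧ q.2 ∈ closedBall xbar δ₂ ∧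
        ¬ F q.1 q.2 ⊆ C}, ⨆ u ∈ sphere (0:X) 1, coreSet C (H q.val.1 q.val.2 u))
    (σ : ℝ) (hσ : 0 < σ) (hσlt : ENNReal.ofReal σ < σH) (hδ₂pos : 0 < δ₂)
    (p : P) (hp : p ∈ closedBall pbar δ₂) (hplsc : ∀ x : X, SVLscAt (F p) x)
    (x₀ : X) (hx₀ : x₀ ∈ closedBall xbar (δ₂ / 2))
    (hx₀exc : exc (F p x₀) C ≤ ENNReal.ofReal (σ / 2 * (δ₂ / 2))) :
    ∃ z : X, F p z ⊆ C ∧ ENNReal.ofReal (σ / 2) * edist z x₀ ≤ exc (F p x₀) C := by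
  set f : X → ℝ≥0∞ := fun x => exc (F p x) C with hf
  have hflsc : LowerSemicontinuous f := lsc_of_svlsc (F p) C hplsc
  have hγ0 : ENNReal.ofReal (σ / 2) ≠ 0 := by
    simp [ENNReal.ofReal_eq_zero, not_le]; positivity
  have hfx₀ : f x₀ ≠ ⊤ := (lt_of_le_of_lt hx₀exc ENNReal.ofReal_lt_top).ne
  obtain ⟨z, hz1, hz2⟩ := ennreal_ekeland f hflsc (ENNReal.ofReal (σ / 2)) hγ0
    ENNReal.ofReal_ne_top x₀ hfx₀
  have hγe : ENNReal.ofReal (σ / 2) * edist z x₀ ≤ f x₀ :=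
    le_trans (le_add_left le_rfl) hz1
  have hfz : f z ≤ f x₀ := le_trans (le_add_right le_rfl) hz1
  have hfzt : f z ≠ ⊤ := fun h => hfx₀ (top_le_iff.1 (h ▸ hfz))
  refine ⟨z, ?_, hγe⟩
  by_contra hnc
  -- z is within δ₂/2 of x₀, hence in the δ₂-ball around xbar
  have hzx₀ : dist z x₀ ≤ δ₂ / 2 := by
    have h1 : ENNReal.ofReal (σ / 2) * edist z x₀ ≤
        ENNReal.ofReal (σ / 2) * ENNReal.ofReal (δ₂ / 2) := by
      rw [← ENNReal.ofReal_mul (by positivity)]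
      exact hγe.trans hx₀exc
    have h2 : edist z x₀ ≤ ENNReal.ofReal (δ₂ / 2) :=
      (ENNReal.mul_le_mul_iff_right hγ0 ENNReal.ofReal_ne_top).1 h1
    rw [edist_dist] at h2
    exact (ENNReal.ofReal_le_ofReal_iff (by positivity)).1 h2
  have hzδ₂ : z ∈ closedBall xbar δ₂ := by
    rw [mem_closedBall] at hx₀ ⊢
    calc dist z xbar ≤ dist z x₀ + dist x₀ xbar := dist_triangle _ _ _
      _ ≤ δ₂ / 2 + δ₂ / 2 := add_le_add hzx₀ hx₀
      _ = δ₂ := by ring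
  set G : ℝ := (f z).toReal with hG
  have hfzG : f z = ENNReal.ofReal G := (ENNReal.ofReal_toReal hfzt).symm
  have hGpos : 0 < G :=
    ENNReal.toReal_pos (fun h0 => hnc ((exc_eq_zero hCclosed).1 h0)) hfzt
  -- descent direction from the core condition
  have hqle : σH ≤ ⨆ u ∈ sphere (0:X) 1, coreSet C (H p z u) := by
    have h := iInf_le (fun q : {q : P × X // q.1 ∈ closedBall pbar δ₂ ∧
        q.2 ∈ closedBall xbar δ₂ ∧ ¬ F q.1 q.2 ⊆ C} =>
        ⨆ u ∈ sphere (0:X) 1, coreSet C (H q.val.1 q.val.2 u))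
      ⟨(p, z), hp, hzδ₂, hnc⟩
    rw [hσHdef]
    exact h
  have hcore : ∃ u ∈ sphere (0:X) 1, ∃ r : ℝ, σ < r ∧
      H p z u + r • closedBall (0:Y) 1 ⊆ C := by
    have h1 : ENNReal.ofReal σ < ⨆ u ∈ sphere (0:X) 1, coreSet C (H p z u) :=
      lt_of_lt_of_le hσlt hqle
    simp only [lt_iSup_iff] at h1
    obtain ⟨u, hu, h2⟩ := h1
    rw [coreSet] at h2
    simp only [lt_iSup_iff] at h2
    obtain ⟨r, hr, h3⟩ := h2
    refine ⟨u, hu, r, ?_, hr.2⟩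
    exact (ENNReal.ofReal_lt_ofReal_iff_of_nonneg hσ.le).1 h3
  obtain ⟨u, hu, r, hσr, hrC⟩ := hcore
  have hunorm : ‖u‖ = 1 := mem_sphere_zero_iff_norm.1 hu
  obtain ⟨δ, hδpos, hδ⟩ := (hH p hp z hzδ₂).2 (σ / 8) (by positivity)
  set t : ℝ := min δ (G / σ) with ht
  have ht0 : 0 < t := lt_min hδpos (by positivity)
  have htδ : t ≤ δ := min_le_left _ _
  have htG : σ * t ≤ G := by
    have := min_le_right δ (G / σ)
    calc σ * t ≤ σ * (G / σ) := by nlinarith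
      _ = G := by field_simp
  set x' : X := z + t • u with hx'
  have hx'z : x' - z = t • u := by simp [hx']
  have hnormtu : ‖t • u‖ = t := by
    rw [norm_smul, hunorm, Real.norm_eq_abs, abs_of_pos ht0, mul_one]
  have hx'znorm : ‖x' - z‖ = t := by rw [hx'z, hnormtu]
  have hx'mem : x' ∈ closedBall z δ := by
    rw [mem_closedBall, dist_eq_norm, hx'znorm]; exact htδ
  have hsub := hδ x' hx'mem
  rw [hx'z, hnormtu, (hH p hp z hzδ₂).1 t ht0 u] at hsub
  -- key estimate : exc (F p x') C ≤ ofReal (max 0 (G - 3/4*(σ*t)))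
  have hexcx' : f x' ≤ ENNReal.ofReal (max 0 (G - 3/4*(σ*t))) := by
    rw [hf]
    refine exc_le_iff.2 fun y' hy' => ?_
    obtain ⟨ab, hab, w, hw, rfl⟩ := hsub hy'
    obtain ⟨y, hy, h', hh', rfl⟩ := hab
    obtain ⟨h, hhmem, rfl⟩ := hh'
    obtain ⟨b, hb, rfl⟩ := hw
    rw [mem_closedBall_zero_iff] at hb
    -- covering of y by C
    have hyC : EMetric.infEdist y C < ENNReal.ofReal (G + σ*t/8) := by
      have h1 : EMetric.infEdist y C ≤ ENNReal.ofReal G := by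
        rw [← hfzG]; exact le_exc hy
      refine lt_of_le_of_lt h1 ?_
      rw [ENNReal.ofReal_lt_ofReal_iff (by positivity)]; nlinarith
    obtain ⟨c, hc, hyc⟩ := EMetric.infEdist_lt_iff.1 hyC
    have hycd : dist y c < G + σ*t/8 := by
      rw [edist_dist] at hyc
      exact (ENNReal.ofReal_lt_ofReal_iff_of_nonneg dist_nonneg).1 hyc
    set v : Y := (y - c) + (σ/8 * t) • b with hv
    have hvnorm : ‖v‖ ≤ G + σ*t/4 := by
      calc ‖v‖ ≤ ‖y - c‖ + ‖(σ/8 * t) • b‖ := norm_add_le _ _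
        _ ≤ (G + σ*t/8) + (σ/8*t) * 1 := by
            refine add_le_add ?_ ?_
            · rw [← dist_eq_norm]; exact hycd.le
            · rw [norm_smul, Real.norm_eq_abs, abs_of_pos (by positivity)]
              exact mul_le_mul_of_nonneg_left hb (by positivity)
        _ = G + σ*t/4 := by ring
    have hy'eq : y + t • h + (σ/8 * t) • b = c + t • h + v := by rw [hv]; abel
    have hkey : ∀ e : Y, ‖e‖ ≤ σ → c + t • (h + e) ∈ C := by
      intro e he
      refine cone_add hCconv hCcone hc (hCcone t ht0 _ (hrC ?_))
      refine Set.add_mem_add hhmem ?_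
      rw [Set.mem_smul_set]
      refine ⟨r⁻¹ • e, ?_, ?_⟩
      · rw [mem_closedBall_zero_iff, norm_smul, Real.norm_eq_abs,
          abs_of_pos (inv_pos.2 (lt_trans hσ hσr))]
        rw [inv_mul_le_iff₀ (by linarith), mul_one]
        linarith
      · rw [smul_smul, mul_inv_cancel₀ (by linarith), one_smul]
    rcases le_or_gt ‖v‖ (t * σ) with hcase | hcase
    · -- y' lands in C
      have : y + t • h + (σ/8 * t) • b ∈ C := by
        rw [hy'eq]
        have heq : c + t • h + v = c + t • (h + t⁻¹ • v) := by
          rw [smul_add, smul_smul, mul_inv_cancel₀ ht0.ne', one_smul]; abel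
        rw [heq]
        refine hkey _ ?_
        rw [norm_smul, Real.norm_eq_abs, abs_of_pos (inv_pos.2 ht0)]
        rw [inv_mul_le_iff₀ ht0]
        linarith [hcase]
      rw [show EMetric.infEdist (y + t • h + (σ/8 * t) • b) C = 0 from EMetric.infEdist_zero_of_mem this]
      exact zero_le
    · have hvpos : 0 < ‖v‖ := lt_of_le_of_lt (by positivity) hcase
      set e : Y := (σ / ‖v‖) • v with he
      have henorm : ‖e‖ = σ := by
        rw [he, norm_smul, Real.norm_eq_abs, abs_of_pos (div_pos hσ hvpos), div_mul_cancel₀]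
        exact hvpos.ne'
      have hzC : c + t • (h + e) ∈ C := hkey e henorm.le
      have hdiff : (y + t • h + (σ/8 * t) • b) - (c + t • (h + e)) = v - t • e := by
        rw [hy'eq, smul_add]; abel
      have hdnorm : ‖v - t • e‖ = ‖v‖ - t * σ := by
        have : v - t • e = (1 - t * σ / ‖v‖) • v := by
          rw [he, smul_smul, sub_smul, one_smul]; ring_nf
        rw [this, norm_smul, Real.norm_eq_abs, abs_of_nonneg, sub_mul, one_mul,
          div_mul_cancel₀ _ hvpos.ne']
        rw [sub_nonneg, div_le_one hvpos]
        exact hcase.le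
      calc EMetric.infEdist (y + t • h + (σ/8 * t) • b) C
          ≤ edist (y + t • h + (σ/8 * t) • b) (c + t • (h + e)) :=
            EMetric.infEdist_le_edist_of_mem hzC
        _ = ENNReal.ofReal (‖v‖ - t * σ) := by
            rw [edist_dist, dist_eq_norm, hdiff, hdnorm]
        _ ≤ ENNReal.ofReal (max 0 (G - 3/4*(σ*t))) := by
            refine ENNReal.ofReal_le_ofReal ?_
            refine le_max_of_le_right ?_
            nlinarith [hvnorm]
  -- Ekeland inequality at x' yields the contradiction
  have hek := hz2 x'
  have hex' : edist x' z = ENNReal.ofReal t := by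
    rw [edist_dist, dist_eq_norm, hx'znorm]
  rw [hfzG, hex'] at hek
  have hfinal : ENNReal.ofReal G ≤
      ENNReal.ofReal (max 0 (G - 3/4*(σ*t)) + σ/2 * t) := by
    calc ENNReal.ofReal G ≤ f x' + ENNReal.ofReal (σ/2) * ENNReal.ofReal t := hek
      _ ≤ ENNReal.ofReal (max 0 (G - 3/4*(σ*t))) + ENNReal.ofReal (σ/2 * t) := by
          rw [← ENNReal.ofReal_mul (by positivity)]
          exact add_le_add_left hexcx' _
      _ = ENNReal.ofReal (max 0 (G - 3/4*(σ*t)) + σ/2 * t) := by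
          rw [ENNReal.ofReal_add (le_max_left _ _) (by positivity)]
  rw [ENNReal.ofReal_le_ofReal_iff (by positivity)] at hfinal
  rcases max_cases 0 (G - 3/4*(σ*t)) with ⟨hm, hm'⟩ | ⟨hm, hm'⟩ <;> rw [hm] at hfinal <;> nlinarith

end AuxLemmas

set_option maxHeartbeats 1000000 in
/-- **Lipschitz continuity of the solution mapping under truncation.**
Under the hypotheses (i)–(vi) and `C`-concavity of `F` on `P × X`, the mapping
`Solv` has a Lipschitz continuous graphical localization around `(pbar, xbar)`. -/
theorem lipschitz_localization_of_Solv
    {P X Y : Type*} [NormedAddCommGroup P] [NormedSpace ℝ P]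
    [NormedAddCommGroup X] [NormedSpace ℝ X] [CompleteSpace X]
    [NormedAddCommGroup Y] [NormedSpace ℝ Y]
    (C : Set Y) (hCclosed : IsClosed C) (hCconv : Convex ℝ C)
    (hCcone : ∀ t : ℝ, 0 < t → ∀ y ∈ C, t • y ∈ C) (hCint : (interior C).Nonempty)
    (F : P → X → Set Y) (hFne : ∀ p x, (F p x).Nonempty)
    (pbar : P) (xbar : X)
    (hsol : F pbar xbar ⊆ C)
    (husc : UpperSemicontinuousAt (fun p => exc (F p xbar) C) pbar)
    (hlsc : ∃ δ₁ > (0:ℝ), ∀ p ∈ closedBall pbar δ₁, ∀ x : X, SVLscAt (F p) x)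
    (δ₂ : ℝ) (hδ₂ : 0 < δ₂) (H : P → X → X → Set Y)
    (hH : ∀ p ∈ closedBall pbar δ₂, ∀ x ∈ closedBall xbar δ₂,
      IsOuterPrederivAt (F p) (H p x) x)
    (σH : ℝ≥0∞)
    (hσHdef : σH = ⨅ q : {q : P × X // q.1 ∈ closedBall pbar δ₂ ∧ q.2 ∈ closedBall xbar δ₂ ∧
        ¬ F q.1 q.2 ⊆ C}, ⨆ u ∈ sphere (0:X) 1, coreSet C (H q.val.1 q.val.2 u))
    (hσHpos : 0 < σH)
    (τ s ℓ : ℝ) (hτ : 0 < τ) (hs : 0 < s) (hℓ : 0 < ℓ)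
    (hlip : ∀ x ∈ closedBall xbar s, ∀ p₁ ∈ closedBall pbar τ, ∀ p₂ ∈ closedBall pbar τ,
      EMetric.hausdorffEdist (F p₁ x) (F p₂ x) ≤ ENNReal.ofReal (ℓ * dist p₁ p₂))
    (hFconc : ∀ w₁ w₂ : P × X, ∀ t ∈ Icc (0:ℝ) 1,
      F (t • w₁ + (1 - t) • w₂).1 (t • w₁ + (1 - t) • w₂).2 ⊆
        t • F w₁.1 w₁.2 + (1 - t) • F w₂.1 w₂.2 + C) :
    ∃ V ∈ nhds pbar, ∃ U ∈ nhds xbar, ∃ L : ℝ, 0 < L ∧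
      ∀ p₁ ∈ V, ∀ p₂ ∈ V,
        EMetric.hausdorffEdist ({x : X | F p₁ x ⊆ C} ∩ U) ({x : X | F p₂ x ⊆ C} ∩ U)
          ≤ ENNReal.ofReal (L * dist p₁ p₂) := by
  obtain ⟨δ₁, hδ₁pos, hlsc'⟩ := hlsc
  obtain ⟨σ, hσ0, hσlt⟩ : ∃ σ : ℝ, 0 < σ ∧ ENNReal.ofReal σ < σH := by
    obtain ⟨q, _, hq1, hq2⟩ := ENNReal.lt_iff_exists_real_btwn.1 hσHpos
    exact ⟨q, ENNReal.ofReal_pos.1 (pos_of_gt hq1), hq2⟩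
  set R : ℝ := min δ₂ s / 4 with hRdef
  have hR : 0 < R := by positivity
  have hRδ₂ : R ≤ δ₂ / 4 := by
    rw [hRdef]; gcongr; exact min_le_left _ _
  have hRs : R ≤ s := by
    rw [hRdef]
    calc min δ₂ s / 4 ≤ s / 4 := by gcongr; exact min_le_right _ _
      _ ≤ s := by linarith
  -- upper semicontinuity at pbar : a ball where the merit at xbar is small
  have h0 : exc (F pbar xbar) C = 0 := (exc_eq_zero hCclosed).2 hsol
  have hev : ∀ᶠ p in 𝓝 pbar, exc (F p xbar) C < ENNReal.ofReal (σ / 2 * (R / 2)) := by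
    refine husc _ ?_
    show exc (F pbar xbar) C < _
    rw [h0]
    exact ENNReal.ofReal_pos.2 (by positivity)
  obtain ⟨ρ₀, hρ₀pos, hρ₀⟩ := Metric.eventually_nhds_iff_ball.1 hev
  set ρ : ℝ := min (min δ₁ δ₂) (min (min τ ρ₀) (σ * δ₂ / (8 * ℓ))) with hρdef
  have hρpos : 0 < ρ := by
    refine lt_min (lt_min hδ₁pos hδ₂) (lt_min (lt_min hτ hρ₀pos) (by positivity))
  have hρδ₁ : ρ ≤ δ₁ := le_trans (min_le_left _ _) (min_le_left _ _)
  have hρδ₂ : ρ ≤ δ₂ := le_trans (min_le_left _ _) (min_le_right _ _)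
  have hρτ : ρ ≤ τ := le_trans (min_le_right _ _) (le_trans (min_le_left _ _) (min_le_left _ _))
  have hρρ₀ : ρ ≤ ρ₀ := le_trans (min_le_right _ _) (le_trans (min_le_left _ _) (min_le_right _ _))
  have hρσ : ρ ≤ σ * δ₂ / (8 * ℓ) := le_trans (min_le_right _ _) (min_le_right _ _)
  set L : ℝ := 16 * ℓ / σ with hLdef
  have hL : 0 < L := by positivity
  have hγ0 : ENNReal.ofReal (σ / 2) ≠ 0 := by
    simp only [ne_eq, ENNReal.ofReal_eq_zero, not_le]; positivity
  -- the one-sided estimate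
  have key : ∀ p₁ ∈ ball pbar ρ, ∀ p₂ ∈ ball pbar ρ, ∀ x : X, F p₂ x ⊆ C → x ∈ ball xbar R →
      EMetric.infEdist x ({x : X | F p₁ x ⊆ C} ∩ ball xbar R) ≤
        ENNReal.ofReal (L * dist p₁ p₂) := by
    intro p₁ hp₁ p₂ hp₂ x hxsol hxU
    rcases eq_or_ne p₁ p₂ with rfl | hne
    · have hmem : x ∈ {x : X | F p₁ x ⊆ C} ∩ ball xbar R := ⟨hxsol, hxU⟩
      rw [show EMetric.infEdist x ({x : X | F p₁ x ⊆ C} ∩ ball xbar R) = 0 from EMetric.infEdist_zero_of_mem hmem]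
      exact zero_le
    have hd : 0 < dist p₁ p₂ := dist_pos.2 hne
    set d : ℝ := dist p₁ p₂ with hddef
    have hp₁ρ : dist p₁ pbar < ρ := mem_ball.1 hp₁
    have hp₂ρ : dist p₂ pbar < ρ := mem_ball.1 hp₂
    have hdlt : d < 2 * ρ := by
      calc d ≤ dist p₁ pbar + dist pbar p₂ := dist_triangle _ _ _
        _ < ρ + ρ := by rw [dist_comm pbar p₂]; exact add_lt_add hp₁ρ hp₂ρ
        _ = 2 * ρ := by ring
    have hp₁δ₂ : p₁ ∈ closedBall pbar δ₂ := mem_closedBall.2 (hp₁ρ.le.trans hρδ₂)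
    have hp₁δ₁ : p₁ ∈ closedBall pbar δ₁ := mem_closedBall.2 (hp₁ρ.le.trans hρδ₁)
    have hp₁τ : p₁ ∈ closedBall pbar τ := mem_closedBall.2 (hp₁ρ.le.trans hρτ)
    have hp₂τ : p₂ ∈ closedBall pbar τ := mem_closedBall.2 (hp₂ρ.le.trans hρτ)
    have hxxbar : dist x xbar < R := mem_ball.1 hxU
    have hxs : x ∈ closedBall xbar s := mem_closedBall.2 (hxxbar.le.trans hRs)
    -- step 1 : the merit of p₁ at x is at most ℓ d
    have hg₁ : exc (F p₁ x) C ≤ ENNReal.ofReal (ℓ * d) := by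
      refine exc_le_iff.2 fun y hy => ?_
      calc EMetric.infEdist y C ≤ EMetric.infEdist y (F p₂ x) := EMetric.infEdist_anti hxsol
        _ ≤ EMetric.hausdorffEdist (F p₁ x) (F p₂ x) :=
            EMetric.infEdist_le_hausdorffEdist_of_mem hy
        _ ≤ ENNReal.ofReal (ℓ * d) := hlip x hxs p₁ hp₁τ p₂ hp₂τ
    have hld : ℓ * d ≤ σ / 2 * (δ₂ / 2) := by
      have h1 : ℓ * d ≤ ℓ * (2 * ρ) := by nlinarith
      have h2 : ℓ * (2 * ρ) ≤ ℓ * (2 * (σ * δ₂ / (8 * ℓ))) := by nlinarith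
      have h3 : ℓ * (2 * (σ * δ₂ / (8 * ℓ))) = σ / 2 * (δ₂ / 2) := by field_simp; ring
      linarith
    -- step 2 : a solution x' of p₁ close to x
    obtain ⟨x', hx'sol, hx'd⟩ := error_bound C hCclosed hCconv hCcone F pbar xbar δ₂ H hH
      σH hσHdef σ hσ0 hσlt hδ₂ p₁ hp₁δ₂ (hlsc' p₁ hp₁δ₁) x
      (mem_closedBall.2 (by linarith))
      (hg₁.trans (ENNReal.ofReal_le_ofReal hld))
    have hβ' : σ / 2 * dist x' x ≤ ℓ * d := by
      have h1 : ENNReal.ofReal (σ / 2) * edist x' x ≤ ENNReal.ofReal (ℓ * d) :=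
        hx'd.trans hg₁
      rw [edist_dist, ← ENNReal.ofReal_mul (by positivity)] at h1
      exact (ENNReal.ofReal_le_ofReal_iff (by positivity)).1 h1
    set β : ℝ := 2 * ℓ / σ * d with hβdef
    have hβpos : 0 < β := by positivity
    have hβ : dist x' x ≤ β := by
      rw [hβdef, show 2 * ℓ / σ * d = 2 * (ℓ * d) / σ by ring, le_div_iff₀ hσ0]
      nlinarith
    -- step 3 : a solution x₀ of p₁ close to xbar
    have hgxbar : exc (F p₁ xbar) C ≤ ENNReal.ofReal (σ / 2 * (R / 2)) :=
      (hρ₀ p₁ (mem_ball.2 (lt_of_lt_of_le hp₁ρ hρρ₀))).le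
    obtain ⟨x₀, hx₀sol, hx₀d⟩ := error_bound C hCclosed hCconv hCcone F pbar xbar δ₂ H hH
      σH hσHdef σ hσ0 hσlt hδ₂ p₁ hp₁δ₂ (hlsc' p₁ hp₁δ₁) xbar
      (mem_closedBall_self (by positivity))
      (hgxbar.trans (ENNReal.ofReal_le_ofReal (by nlinarith)))
    have hη : dist x₀ xbar ≤ R / 2 := by
      have h1 : ENNReal.ofReal (σ / 2) * edist x₀ xbar ≤
          ENNReal.ofReal (σ / 2) * ENNReal.ofReal (R / 2) := by
        rw [← ENNReal.ofReal_mul (by positivity)]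
        exact hx₀d.trans hgxbar
      have h2 := (ENNReal.mul_le_mul_iff_right hγ0 ENNReal.ofReal_ne_top).1 h1
      rw [edist_dist] at h2
      exact (ENNReal.ofReal_le_ofReal_iff (by positivity)).1 h2
    -- step 4 : convex combination
    set lam : ℝ := β / (β + R / 4) with hlamdef
    have hD : 0 < β + R / 4 := by positivity
    have hlam0 : 0 < lam := by positivity
    have hlam1 : lam < 1 := by
      rw [hlamdef, div_lt_one hD]; linarith
    have hlamD : lam * (β + R / 4) = β := div_mul_cancel₀ β hD.ne'
    set y : X := lam • x₀ + (1 - lam) • x' with hydef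
    have hysol : F p₁ y ⊆ C := by
      have hc := hFconc (p₁, x₀) (p₁, x') lam ⟨hlam0.le, hlam1.le⟩
      have h1 : lam • ((p₁, x₀) : P × X) + (1 - lam) • ((p₁, x') : P × X) = (p₁, y) := by
        rw [Prod.smul_mk, Prod.smul_mk, Prod.mk_add_mk, hydef]
        congr 1
        rw [← add_smul]
        simp
      rw [h1] at hc
      intro w hw
      obtain ⟨ab, hab, c₃, hc₃, rfl⟩ := hc hw
      obtain ⟨a1, ha1, a2, ha2, rfl⟩ := hab
      obtain ⟨c₁, hc₁, rfl⟩ := Set.mem_smul_set.1 ha1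
      obtain ⟨c₂, hc₂, rfl⟩ := Set.mem_smul_set.1 ha2
      exact cone_add hCconv hCcone (cone_add hCconv hCcone
        (hCcone lam hlam0 _ (hx₀sol hc₁))
        (hCcone (1 - lam) (by linarith) _ (hx'sol hc₂))) hc₃
    have hx'xbar : ‖x' - xbar‖ ≤ β + R := by
      calc ‖x' - xbar‖ ≤ ‖x' - x‖ + ‖x - xbar‖ := norm_sub_le_norm_sub_add_norm_sub _ _ _
        _ ≤ β + R := by
            refine add_le_add ?_ ?_
            · rw [← dist_eq_norm]; exact hβ
            · rw [← dist_eq_norm]; exact hxxbar.le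
    have hyU : y ∈ ball xbar R := by
      have hxb : lam • xbar + (1 - lam) • xbar = xbar := by
        rw [← add_smul, show lam + (1 - lam) = 1 by ring, one_smul]
      have hcomb : y - xbar = lam • (x₀ - xbar) + (1 - lam) • (x' - xbar) := by
        calc y - xbar = lam • x₀ + (1 - lam) • x' - (lam • xbar + (1 - lam) • xbar) := by
              rw [hxb, hydef]
          _ = lam • (x₀ - xbar) + (1 - lam) • (x' - xbar) := by
              rw [smul_sub, smul_sub]; abel
      rw [mem_ball, dist_eq_norm, hcomb]
      have h1 : ‖lam • (x₀ - xbar) + (1 - lam) • (x' - xbar)‖ ≤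
          lam * (R / 2) + (1 - lam) * (β + R) := by
        calc ‖lam • (x₀ - xbar) + (1 - lam) • (x' - xbar)‖
            ≤ ‖lam • (x₀ - xbar)‖ + ‖(1 - lam) • (x' - xbar)‖ := norm_add_le _ _
          _ = lam * ‖x₀ - xbar‖ + (1 - lam) * ‖x' - xbar‖ := by
              rw [norm_smul, norm_smul, Real.norm_eq_abs, Real.norm_eq_abs,
                abs_of_pos hlam0, abs_of_pos (by linarith : (0:ℝ) < 1 - lam)]
          _ ≤ lam * (R / 2) + (1 - lam) * (β + R) := by
              refine add_le_add ?_ ?_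
              · refine mul_le_mul_of_nonneg_left ?_ hlam0.le
                rw [← dist_eq_norm]; exact hη
              · exact mul_le_mul_of_nonneg_left hx'xbar (by linarith)
      refine lt_of_le_of_lt h1 ?_
      nlinarith [mul_pos hlam0 hR]
    have hyx : dist y x ≤ 8 * β := by
      have hcomb : y - x = (x' - x) + lam • (x₀ - x') := by
        rw [hydef, smul_sub, sub_smul, one_smul]
        abel
      have hA : ‖x₀ - x'‖ ≤ 3 * R / 2 + β := by
        calc ‖x₀ - x'‖ ≤ ‖x₀ - xbar‖ + ‖xbar - x‖ + ‖x - x'‖ := by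
              have := norm_sub_le_norm_sub_add_norm_sub x₀ xbar x'
              have h2 := norm_sub_le_norm_sub_add_norm_sub xbar x x'
              linarith
          _ ≤ R / 2 + R + β := by
              refine add_le_add (add_le_add ?_ ?_) ?_
              · rw [← dist_eq_norm]; exact hη
              · rw [← dist_eq_norm, dist_comm]; exact hxxbar.le
              · rw [← dist_eq_norm, dist_comm]; exact hβ
          _ = 3 * R / 2 + β := by ring
      have h1 : lam * ‖x₀ - x'‖ ≤ lam * (3 * R / 2 + β) :=
        mul_le_mul_of_nonneg_left hA hlam0.le
      have h2 : lam * (3 * R / 2 + β) ≤ 7 * β := by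
        nlinarith [hlamD, mul_nonneg hlam0.le hβpos.le]
      calc dist y x = ‖y - x‖ := dist_eq_norm _ _
        _ = ‖(x' - x) + lam • (x₀ - x')‖ := by rw [hcomb]
        _ ≤ ‖x' - x‖ + ‖lam • (x₀ - x')‖ := norm_add_le _ _
        _ ≤ β + lam * ‖x₀ - x'‖ := by
            refine add_le_add ?_ ?_
            · rw [← dist_eq_norm]; exact hβ
            · rw [norm_smul, Real.norm_eq_abs, abs_of_pos hlam0]
        _ ≤ 8 * β := by linarith
    have h8β : 8 * β = L * d := by rw [hβdef, hLdef]; ring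
    have hymem : y ∈ {x : X | F p₁ x ⊆ C} ∩ ball xbar R := ⟨hysol, hyU⟩
    refine le_trans (EMetric.infEdist_le_edist_of_mem hymem) ?_
    rw [edist_dist]
    refine ENNReal.ofReal_le_ofReal ?_
    rw [dist_comm]
    linarith [hyx, h8β.le]
  refine ⟨ball pbar ρ, ball_mem_nhds _ hρpos, ball xbar R, ball_mem_nhds _ hR, L, hL, ?_⟩
  intro p₁ hp₁ p₂ hp₂
  refine EMetric.hausdorffEdist_le_of_infEdist ?_ ?_
  · intro x hx
    have := key p₂ hp₂ p₁ hp₁ x hx.1 hx.2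
    rwa [dist_comm p₂ p₁] at this
  · intro x hx
    exact key p₁ hp₁ p₂ hp₂ x hx.1 hx.2
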